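/- arXiv:2301.12187 — 4 statements merged into one kernel-verified Lean document; each statement's English description precedes it below -/
import Mathlib

section
/- Under the recurrence assumptions, for every l ≥ 1 and every real t > T_opt(0, l), the pair (A(l,t), S(l,t)) is an optimal solution of problem P(l, t); that is: A(l,t) ⊆ S(l,t) ⊆ {1, …, l−1}, the feasibility constraint chainSum T ({0} ∪ S(l,t) ∪ {l}) < t holds, and for every pair of finite sets (A', S') with A' ⊆ S' ⊆ {1, …, l−1} and chainSum T ({0} ∪ S' ∪ {l}) < t one has chainSum I ({0} ∪ A' ∪ {l}) ≤ chainSum I ({0} ∪ A(l,t) ∪ {l}). -/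
noncomputable section

/-- Chain sum of `f` over the consecutive pairs of the elements of `P` in increasing order. -/
def chainSum (f : ℕ → ℕ → ℝ) (P : Finset ℕ) : ℝ :=
  (List.zipWith f (P.sort (· ≤ ·)) (P.sort (· ≤ ·)).tail).sum

/-- Optimal latency `T_opt(k,l)`: the minimum of `chainSum T ({k} ∪ S ∪ {l})`
over all finite sets `S ⊆ {k+1,…,l−1}`. -/
def Topt (T : ℕ → ℕ → ℝ) (k l : ℕ) : ℝ :=
  ((Finset.Ioo k l).powerset.image (fun S => chainSum T ({k} ∪ S ∪ {l}))).min'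
    ((Finset.powerset_nonempty _).image _)

lemma sort_union_of_lt (P Q : Finset ℕ) (h : ∀ p ∈ P, ∀ q ∈ Q, p < q) :
    (P ∪ Q).sort (· ≤ ·) = P.sort (· ≤ ·) ++ Q.sort (· ≤ ·) := by
  have hd : Disjoint P Q := by
    rw [Finset.disjoint_left]
    intro a haP haQ
    exact absurd (h a haP a haQ) (lt_irrefl a)
  refine (fun hp hs => List.Perm.eq_of_pairwise' (Finset.pairwise_sort _ _) hs hp) ?_ ?_
  · rw [← Multiset.coe_eq_coe]
    rw [← Multiset.coe_add, Finset.sort_eq, Finset.sort_eq, Finset.sort_eq,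
      ← Finset.disjUnion_eq_union P Q hd]
    rfl
  · rw [List.pairwise_append]
    refine ⟨Finset.pairwise_sort _ _, Finset.pairwise_sort _ _, ?_⟩
    intro x hx y hy
    exact le_of_lt (h x ((Finset.mem_sort _).mp hx) y ((Finset.mem_sort _).mp hy))

lemma zip_sum_split (f : ℕ → ℕ → ℝ) (L2 : List ℕ) (m : ℕ) :
    ∀ L1 : List ℕ,
    (List.zipWith f (L1 ++ m :: L2) (L1 ++ m :: L2).tail).sum
      = (List.zipWith f (L1 ++ [m]) (L1 ++ [m]).tail).sum
        + (List.zipWith f (m :: L2) L2).sum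
  | [] => by simp
  | [a] => by simp
  | a :: b :: L1 => by
    have ih := zip_sum_split f L2 m (b :: L1)
    simp only [List.cons_append, List.tail_cons, List.zipWith_cons_cons, List.sum_cons] at ih ⊢
    rw [ih]; ring

lemma sort_erase_append (P : Finset ℕ) (m : ℕ) (hP : ∀ p ∈ P, p ≤ m) (hmP : m ∈ P) :
    P.sort (· ≤ ·) = (P.erase m).sort (· ≤ ·) ++ [m] := by
  have : P = P.erase m ∪ {m} := by
    rw [Finset.union_comm, ← Finset.insert_eq, Finset.insert_erase hmP]
  conv_lhs => rw [this]
  rw [sort_union_of_lt, Finset.sort_singleton]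
  intro p hp q hq
  rw [Finset.mem_erase] at hp
  rw [Finset.mem_singleton] at hq
  subst hq
  exact lt_of_le_of_ne (hP p hp.2) hp.1

lemma sort_cons_erase (Q : Finset ℕ) (m : ℕ) (hQ : ∀ q ∈ Q, m ≤ q) (hmQ : m ∈ Q) :
    Q.sort (· ≤ ·) = m :: (Q.erase m).sort (· ≤ ·) := by
  have : Q = {m} ∪ Q.erase m := by
    rw [← Finset.insert_eq, Finset.insert_erase hmQ]
  conv_lhs => rw [this]
  rw [sort_union_of_lt, Finset.sort_singleton]
  · rfl
  intro p hp q hq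
  rw [Finset.mem_singleton] at hp
  rw [Finset.mem_erase] at hq
  subst hp
  exact lt_of_le_of_ne (hQ q hq.2) (Ne.symm hq.1)

lemma chainSum_split (f : ℕ → ℕ → ℝ) (P Q : Finset ℕ) (m : ℕ)
    (hP : ∀ p ∈ P, p ≤ m) (hmP : m ∈ P) (hQ : ∀ q ∈ Q, m ≤ q) (hmQ : m ∈ Q) :
    chainSum f (P ∪ Q) = chainSum f P + chainSum f Q := by
  have hPQ : P ∪ Q = P.erase m ∪ Q := by
    ext x
    simp only [Finset.mem_union, Finset.mem_erase]
    constructor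
    · rintro (hx | hx)
      · by_cases hxm : x = m
        · exact Or.inr (hxm ▸ hmQ)
        · exact Or.inl ⟨hxm, hx⟩
      · exact Or.inr hx
    · rintro (hx | hx)
      · exact Or.inl hx.2
      · exact Or.inr hx
  have hsort : (P ∪ Q).sort (· ≤ ·) = (P.erase m).sort (· ≤ ·) ++ m :: (Q.erase m).sort (· ≤ ·) := by
    rw [hPQ, sort_union_of_lt, sort_cons_erase Q m hQ hmQ]
    intro p hp q hq
    rw [Finset.mem_erase] at hp
    exact lt_of_le_of_ne (le_trans (hP p hp.2) (hQ q hq)) (by rintro rfl; exact hp.1 (le_antisymm (hP p hp.2) (hQ p hq)))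
  have hPs := sort_erase_append P m hP hmP
  have hQs := sort_cons_erase Q m hQ hmQ
  unfold chainSum
  rw [hsort, hPs, hQs, zip_sum_split]
  rfl

lemma chainSum_singleton (f : ℕ → ℕ → ℝ) (k : ℕ) : chainSum f {k} = 0 := by
  simp [chainSum]

lemma chainSum_pair (f : ℕ → ℕ → ℝ) {k l : ℕ} (h : k < l) : chainSum f {k, l} = f k l := by
  have : ({k, l} : Finset ℕ) = {k} ∪ {l} := rfl
  rw [chainSum, this, sort_union_of_lt _ _ (by simpa using h)]
  simp

lemma Topt_le (T : ℕ → ℕ → ℝ) {k l : ℕ} {S : Finset ℕ} (hS : S ⊆ Finset.Ioo k l) :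
    Topt T k l ≤ chainSum T ({k} ∪ S ∪ {l}) :=
  Finset.min'_le _ _ (Finset.mem_image_of_mem _ (Finset.mem_powerset.mpr hS))

lemma Topt_self (T : ℕ → ℕ → ℝ) (k : ℕ) : Topt T k k = 0 := by
  have h1 : (Finset.Ioo k k).powerset = {∅} := by simp
  rw [Topt]
  simp only [h1, Finset.image_singleton]
  rw [Finset.min'_singleton]
  simp [chainSum_singleton]

lemma mem_bound_left {S : Finset ℕ} {k : ℕ} (hS : S ⊆ Finset.Ioo 0 k) :
    ∀ p ∈ ({0} ∪ S ∪ {k} : Finset ℕ), p ≤ k := by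
  intro p hp
  simp only [Finset.mem_union, Finset.mem_singleton] at hp
  rcases hp with (rfl | hp) | rfl
  · exact Nat.zero_le _
  · exact le_of_lt (Finset.mem_Ioo.mp (hS hp)).2
  · exact le_refl _

lemma mem_bound_right {S : Finset ℕ} {k l : ℕ} (hS : S ⊆ Finset.Ioo k l) (hkl : k ≤ l) :
    ∀ q ∈ ({k} ∪ S ∪ {l} : Finset ℕ), k ≤ q := by
  intro q hq
  simp only [Finset.mem_union, Finset.mem_singleton] at hq
  rcases hq with (rfl | hq) | rfl
  · exact le_refl _
  · exact le_of_lt (Finset.mem_Ioo.mp (hS hq)).1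
  · exact hkl

/-- Under the recurrence assumptions, for every `l ≥ 1` and `t > T_opt(0,l)`,
`(A l t, S l t)` is an optimal solution of problem `P(l,t)`. -/
theorem optimality_of_DP
    (T I : ℕ → ℕ → ℝ) (A S : ℕ → ℝ → Finset ℕ)
    (hA_sub : ∀ l t, A l t ⊆ Finset.Ioo 0 l)
    (hS_sub : ∀ l t, S l t ⊆ Finset.Ioo 0 l)
    (hbase : ∀ t, A 0 t = ∅ ∧ S 0 t = ∅)
    (hrec : ∀ l, 1 ≤ l → ∀ t : ℝ, Topt T 0 l < t →
      ∃ k, k < l ∧ ∃ Sopt : Finset ℕ, Sopt ⊆ Finset.Ioo k l ∧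
        chainSum T ({k} ∪ Sopt ∪ {l}) = Topt T k l ∧
        Topt T 0 k + Topt T k l < t ∧
        (∀ k', k' < l → Topt T 0 k' + Topt T k' l < t →
          chainSum I ({0} ∪ A k' (t - Topt T k' l) ∪ {k', l}) ≤
            chainSum I ({0} ∪ A k (t - Topt T k l) ∪ {k, l})) ∧
        A l t = A k (t - Topt T k l) ∪ ({k} \ {0}) ∧
        S l t = S k (t - Topt T k l) ∪ ({k} \ {0}) ∪ Sopt) :
    ∀ l, 1 ≤ l → ∀ t : ℝ, Topt T 0 l < t →
      A l t ⊆ S l t ∧ S l t ⊆ Finset.Ioo 0 l ∧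
      chainSum T ({0} ∪ S l t ∪ {l}) < t ∧
      (∀ A' S' : Finset ℕ, A' ⊆ S' → S' ⊆ Finset.Ioo 0 l →
        chainSum T ({0} ∪ S' ∪ {l}) < t →
        chainSum I ({0} ∪ A' ∪ {l}) ≤ chainSum I ({0} ∪ A l t ∪ {l})) := by
  intro l
  induction l using Nat.strong_induction_on with
  | _ l IH =>
  intro hl t ht
  obtain ⟨k, hkl, Sopt, hSopt_sub, hSopt_eq, hsum_lt, hmax, hAeq, hSeq⟩ := hrec l hl t ht
  set t' := t - Topt T k l with ht'def
  -- key facts at k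
  have hkgood : A k t' ⊆ S k t' ∧ chainSum T ({0} ∪ S k t' ∪ {k}) < t' := by
    rcases Nat.eq_zero_or_pos k with rfl | hk1
    · obtain ⟨hA0, hS0⟩ := hbase t'
      rw [hA0, hS0]
      refine ⟨subset_rfl, ?_⟩
      have h1 : ({0} : Finset ℕ) ∪ ∅ ∪ {0} = {0} := by simp
      rw [h1, chainSum_singleton]
      have h00 := Topt_self T 0
      rw [ht'def]
      linarith [hsum_lt]
    · have h0k : Topt T 0 k < t' := by rw [ht'def]; linarith [hsum_lt]
      obtain ⟨h1, _, h3, _⟩ := IH k hkl hk1 t' h0k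
      exact ⟨h1, h3⟩
  -- set identities
  have hAset : ({0} : Finset ℕ) ∪ A l t ∪ {l} = {0} ∪ A k t' ∪ {k, l} := by
    rw [hAeq]
    ext x
    simp only [Finset.mem_union, Finset.mem_singleton, Finset.mem_sdiff, Finset.mem_insert]
    by_cases hx : x ∈ A k t' <;> simp [hx] <;> omega
  have hSset : ({0} : Finset ℕ) ∪ S l t ∪ {l}
      = ({0} ∪ S k t' ∪ {k}) ∪ ({k} ∪ Sopt ∪ {l}) := by
    rw [hSeq]
    ext x
    simp only [Finset.mem_union, Finset.mem_singleton, Finset.mem_sdiff]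
    by_cases hx1 : x ∈ S k t' <;> by_cases hx2 : x ∈ Sopt <;> simp [hx1, hx2] <;> omega
  have hfeas : chainSum T ({0} ∪ S l t ∪ {l}) < t := by
    rw [hSset, chainSum_split T _ _ k (mem_bound_left (hS_sub k t')) (by simp)
      (mem_bound_right hSopt_sub (le_of_lt hkl)) (by simp), hSopt_eq]
    have := hkgood.2
    rw [ht'def] at this
    linarith
  refine ⟨?_, hS_sub l t, hfeas, ?_⟩
  · rw [hAeq, hSeq]
    exact (Finset.union_subset_union hkgood.1 subset_rfl).trans Finset.subset_union_left
  · intro A' S' hsub hS'sub hfeas'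
    rw [show chainSum I ({0} ∪ A l t ∪ {l}) = chainSum I ({0} ∪ A k t' ∪ {k, l}) by rw [hAset]]
    rcases Finset.eq_empty_or_nonempty A' with rfl | hne
    · have h0 := hmax 0 hl (by rw [Topt_self]; linarith)
      rw [(hbase _).1] at h0
      have hset0 : ({0} : Finset ℕ) ∪ ∅ ∪ {0, l} = {0} ∪ (∅ : Finset ℕ) ∪ {l} := by
        ext x; simp
      rw [hset0] at h0
      exact h0
    · set k' := A'.max' hne with hk'
      have hk'A : k' ∈ A' := A'.max'_mem hne
      have hk'S : k' ∈ S' := hsub hk'A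
      have hk'Ioo := Finset.mem_Ioo.mp (hS'sub hk'S)
      have hk'pos : 1 ≤ k' := hk'Ioo.1
      have hk'l : k' < l := hk'Ioo.2
      set A'' := A'.erase k' with hA''
      set S1 := S'.filter (· < k') with hS1
      set S2 := S'.filter (k' < ·) with hS2
      have hA''lt : ∀ a ∈ A'', a < k' := fun a ha =>
        lt_of_le_of_ne (A'.le_max' a (Finset.mem_of_mem_erase ha)) (Finset.ne_of_mem_erase ha)
      have hA''S1 : A'' ⊆ S1 := fun a ha =>
        Finset.mem_filter.mpr ⟨hsub (Finset.mem_of_mem_erase ha), hA''lt a ha⟩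
      have hA''sub : A'' ⊆ Finset.Ioo 0 k' := fun a ha => Finset.mem_Ioo.mpr
        ⟨(Finset.mem_Ioo.mp (hS'sub (hsub (Finset.mem_of_mem_erase ha)))).1, hA''lt a ha⟩
      have hS1sub : S1 ⊆ Finset.Ioo 0 k' := by
        intro x hx
        rw [hS1, Finset.mem_filter] at hx
        exact Finset.mem_Ioo.mpr ⟨(Finset.mem_Ioo.mp (hS'sub hx.1)).1, hx.2⟩
      have hS2sub : S2 ⊆ Finset.Ioo k' l := by
        intro x hx
        rw [hS2, Finset.mem_filter] at hx
        exact Finset.mem_Ioo.mpr ⟨hx.2, (Finset.mem_Ioo.mp (hS'sub hx.1)).2⟩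
      have E1 : ({0} : Finset ℕ) ∪ S' ∪ {l} = ({0} ∪ S1 ∪ {k'}) ∪ ({k'} ∪ S2 ∪ {l}) := by
        ext x
        simp only [hS1, hS2, Finset.mem_union, Finset.mem_singleton, Finset.mem_filter]
        by_cases hx : x ∈ S'
        · simp [hx]; omega
        · have hxk : x ≠ k' := fun h => hx (h ▸ hk'S)
          simp [hx]; omega
      rw [E1, chainSum_split T _ _ k' (mem_bound_left hS1sub) (by simp)
        (mem_bound_right hS2sub (le_of_lt hk'l)) (by simp)] at hfeas'
      have hTopt2 : Topt T k' l ≤ chainSum T ({k'} ∪ S2 ∪ {l}) := Topt_le T hS2sub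
      have hS1feas : chainSum T ({0} ∪ S1 ∪ {k'}) < t - Topt T k' l := by linarith
      have ht'' : Topt T 0 k' < t - Topt T k' l := lt_of_le_of_lt (Topt_le T hS1sub) hS1feas
      obtain ⟨_, _, _, hopt⟩ := IH k' hk'l hk'pos (t - Topt T k' l) ht''
      have h1 := hopt A'' S1 hA''S1 hS1sub hS1feas
      have hA'ins : A' = insert k' A'' := (Finset.insert_erase hk'A).symm
      have E2 : ({0} : Finset ℕ) ∪ A' ∪ {l} = ({0} ∪ A'' ∪ {k'}) ∪ ({k'} ∪ ∅ ∪ {l}) := by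
        conv_lhs => rw [hA'ins]
        ext x
        simp only [Finset.mem_union, Finset.mem_singleton, Finset.mem_insert,
          Finset.notMem_empty, or_false, false_or]
        by_cases hx : x ∈ A'' <;> simp [hx] <;> omega
      have E3 : ({0} : Finset ℕ) ∪ A k' (t - Topt T k' l) ∪ {k', l}
          = ({0} ∪ A k' (t - Topt T k' l) ∪ {k'}) ∪ ({k'} ∪ ∅ ∪ {l}) := by
        ext x
        simp only [Finset.mem_union, Finset.mem_singleton, Finset.mem_insert,
          Finset.notMem_empty, or_false, false_or]
        by_cases hx : x ∈ A k' (t - Topt T k' l) <;> simp [hx] <;> omega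
      have hsplit2 := chainSum_split I ({0} ∪ A'' ∪ {k'}) ({k'} ∪ (∅ : Finset ℕ) ∪ {l}) k'
        (mem_bound_left hA''sub) (by simp)
        (mem_bound_right (Finset.empty_subset _) (le_of_lt hk'l)) (by simp)
      have hsplit3 := chainSum_split I ({0} ∪ A k' (t - Topt T k' l) ∪ {k'})
        ({k'} ∪ (∅ : Finset ℕ) ∪ {l}) k'
        (mem_bound_left (hA_sub k' _)) (by simp)
        (mem_bound_right (Finset.empty_subset _) (le_of_lt hk'l)) (by simp)
      have h2 := hmax k' hk'l (by linarith)
      rw [E3, hsplit3] at h2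
      rw [E2, hsplit2]
      linarith
end
end

section
/- Under the recurrence assumptions, for every l ≥ 1 and every real t > T_opt(0, l), the set S(l,t) minimizes the latency among all merge patterns containing A(l,t); that is, chainSum T ({0} ∪ S(l,t) ∪ {l}) = min over all finite sets S' with A(l,t) ⊆ S' ⊆ {1, …, l−1} of chainSum T ({0} ∪ S' ∪ {l}). -/
noncomputable section

namespace MergeAux

def listChain (f : ℕ → ℕ → ℝ) (L : List ℕ) : ℝ :=
  (List.zipWith f L L.tail).sum

lemma chainSum_eq (f : ℕ → ℕ → ℝ) (P : Finset ℕ) :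
    chainSum f P = listChain f (P.sort (· ≤ ·)) := rfl

@[simp] lemma listChain_nil (f : ℕ → ℕ → ℝ) : listChain f [] = 0 := rfl

@[simp] lemma listChain_single (f : ℕ → ℕ → ℝ) (a : ℕ) : listChain f [a] = 0 := rfl

@[simp] lemma listChain_cons_cons (f : ℕ → ℕ → ℝ) (a b : ℕ) (L : List ℕ) :
    listChain f (a :: b :: L) = f a b + listChain f (b :: L) := by
  simp [listChain]

lemma listChain_append (f : ℕ → ℕ → ℝ) (l₁ : List ℕ) (l₂ : List ℕ) (k : ℕ) :
    listChain f (l₁ ++ k :: l₂) = listChain f (l₁ ++ [k]) + listChain f (k :: l₂) := by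
  induction l₁ with
  | nil => simp
  | cons a l₁ ih =>
    cases l₁ with
    | nil => simp
    | cons b l₁ =>
      simp only [List.cons_append, listChain_cons_cons] at *
      rw [ih]; ring

lemma sort_union (P R : Finset ℕ) (h : ∀ x ∈ P, ∀ y ∈ R, x < y) :
    (P ∪ R).sort (· ≤ ·) = P.sort (· ≤ ·) ++ R.sort (· ≤ ·) := by
  have hd : Disjoint P R := by
    rw [Finset.disjoint_left]
    intro a haP haR
    exact absurd (h a haP a haR) (lt_irrefl a)
  refine (fun hp h1 h2 => List.Perm.eq_of_pairwise' (r := fun a b : ℕ => a ≤ b) h1 h2 hp) ?_ ?_ ?_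
  · rw [← Multiset.coe_eq_coe]
    rw [← Multiset.coe_add, Finset.sort_eq, Finset.sort_eq, Finset.sort_eq,
      ← Finset.disjUnion_eq_union P R hd]
    rfl
  · exact Finset.pairwise_sort _ _
  · rw [List.pairwise_append]
    refine ⟨Finset.pairwise_sort _ _, Finset.pairwise_sort _ _, fun x hx y hy => ?_⟩
    exact le_of_lt (h x ((Finset.mem_sort _).mp hx) y ((Finset.mem_sort _).mp hy))

lemma sort_min (Q : Finset ℕ) (k : ℕ) (hk : k ∈ Q) (hmin : ∀ x ∈ Q, k ≤ x) :
    Q.sort (· ≤ ·) = k :: (Q.erase k).sort (· ≤ ·) := by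
  have hQ : Q = {k} ∪ Q.erase k := by
    rw [← Finset.insert_eq, Finset.insert_erase hk]
  nth_rewrite 1 [hQ]
  rw [sort_union, Finset.sort_singleton]
  · rfl
  · intro x hx y hy
    rw [Finset.mem_singleton] at hx
    subst hx
    exact lt_of_le_of_ne (hmin y (Finset.mem_of_mem_erase hy))
      (Ne.symm (Finset.ne_of_mem_erase hy))

lemma sort_max (P : Finset ℕ) (k : ℕ) (hk : k ∈ P) (hmax : ∀ x ∈ P, x ≤ k) :
    P.sort (· ≤ ·) = (P.erase k).sort (· ≤ ·) ++ [k] := by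
  have hP : P = P.erase k ∪ {k} := by
    rw [Finset.union_comm, ← Finset.insert_eq, Finset.insert_erase hk]
  nth_rewrite 1 [hP]
  rw [sort_union, Finset.sort_singleton]
  intro x hx y hy
  rw [Finset.mem_singleton] at hy
  subst hy
  exact lt_of_le_of_ne (hmax x (Finset.mem_of_mem_erase hx)) (Finset.ne_of_mem_erase hx)

lemma chainSum_split (f : ℕ → ℕ → ℝ) (P Q : Finset ℕ) (k : ℕ)
    (hkP : k ∈ P) (hkQ : k ∈ Q) (hP : ∀ x ∈ P, x ≤ k) (hQ : ∀ x ∈ Q, k ≤ x) :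
    chainSum f (P ∪ Q) = chainSum f P + chainSum f Q := by
  have hPQ : P ∪ Q = P.erase k ∪ Q := by
    ext x
    simp only [Finset.mem_union, Finset.mem_erase]
    constructor
    · rintro (hx | hx)
      · by_cases hxk : x = k
        · exact Or.inr (hxk ▸ hkQ)
        · exact Or.inl ⟨hxk, hx⟩
      · exact Or.inr hx
    · rintro (⟨_, hx⟩ | hx)
      · exact Or.inl hx
      · exact Or.inr hx
  rw [chainSum_eq, chainSum_eq, chainSum_eq, hPQ, sort_union, sort_min Q k hkQ hQ,
    listChain_append, ← sort_max P k hkP hP, ← sort_min Q k hkQ hQ]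
  intro x hx y hy
  have hx' := Finset.mem_erase.mp hx
  refine lt_of_le_of_ne (le_trans (hP x hx'.2) (hQ y hy)) (fun h => hx'.1 ?_)
  exact le_antisymm (hP x hx'.2) (h ▸ hQ y hy)

lemma chainSum_split' (f : ℕ → ℕ → ℝ) (X Y : Finset ℕ) (a k b : ℕ)
    (hX : X ⊆ Finset.Ioo a k) (hY : Y ⊆ Finset.Ioo k b) (hak : a ≤ k) (hkb : k ≤ b) :
    chainSum f ({a} ∪ (X ∪ {k} ∪ Y) ∪ {b}) =
      chainSum f ({a} ∪ X ∪ {k}) + chainSum f ({k} ∪ Y ∪ {b}) := by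
  have hU : {a} ∪ (X ∪ {k} ∪ Y) ∪ {b} = ({a} ∪ X ∪ {k}) ∪ ({k} ∪ Y ∪ {b}) := by
    ext x
    simp only [Finset.mem_union, Finset.mem_singleton]
    tauto
  rw [hU]
  apply chainSum_split f _ _ k (by simp) (by simp)
  · intro x hx
    simp only [Finset.mem_union, Finset.mem_singleton] at hx
    rcases hx with (hx | hx) | hx
    · omega
    · exact le_of_lt (Finset.mem_Ioo.mp (hX hx)).2
    · omega
  · intro x hx
    simp only [Finset.mem_union, Finset.mem_singleton] at hx
    rcases hx with (hx | hx) | hx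
    · omega
    · exact le_of_lt (Finset.mem_Ioo.mp (hY hx)).1
    · omega

lemma Topt_le (T : ℕ → ℕ → ℝ) (k l : ℕ) (S : Finset ℕ) (hS : S ⊆ Finset.Ioo k l) :
    Topt T k l ≤ chainSum T ({k} ∪ S ∪ {l}) := by
  apply Finset.min'_le
  exact Finset.mem_image_of_mem _ (Finset.mem_powerset.mpr hS)

end MergeAux

open MergeAux in
/-- Under the recurrence assumptions, for every `l ≥ 1` and `t > T_opt(0,l)`, the merge
pattern `S l t` minimizes the latency among all merge patterns containing `A l t`. -/
theorem merge_pattern_latency_optimal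
    (T I : ℕ → ℕ → ℝ) (A S : ℕ → ℝ → Finset ℕ)
    (hA_sub : ∀ l t, A l t ⊆ Finset.Ioo 0 l)
    (hS_sub : ∀ l t, S l t ⊆ Finset.Ioo 0 l)
    (hbase : ∀ t, A 0 t = ∅ ∧ S 0 t = ∅)
    (hrec : ∀ l, 1 ≤ l → ∀ t : ℝ, Topt T 0 l < t →
      ∃ k, k < l ∧ ∃ Sopt : Finset ℕ, Sopt ⊆ Finset.Ioo k l ∧
        chainSum T ({k} ∪ Sopt ∪ {l}) = Topt T k l ∧
        Topt T 0 k + Topt T k l < t ∧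
        (∀ k', k' < l → Topt T 0 k' + Topt T k' l < t →
          chainSum I ({0} ∪ A k' (t - Topt T k' l) ∪ {k', l}) ≤
            chainSum I ({0} ∪ A k (t - Topt T k l) ∪ {k, l})) ∧
        A l t = A k (t - Topt T k l) ∪ ({k} \ {0}) ∧
        S l t = S k (t - Topt T k l) ∪ ({k} \ {0}) ∪ Sopt) :
    ∀ l, 1 ≤ l → ∀ t : ℝ, Topt T 0 l < t →
      IsLeast {x : ℝ | ∃ S' : Finset ℕ, A l t ⊆ S' ∧ S' ⊆ Finset.Ioo 0 l ∧
          x = chainSum T ({0} ∪ S' ∪ {l})}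
        (chainSum T ({0} ∪ S l t ∪ {l})) := by
  intro l
  induction l using Nat.strong_induction_on with
  | _ l IH =>
  intro hl t ht
  obtain ⟨k, hkl, Sopt, hSopt, hchain, hsum, _, hA, hS⟩ := hrec l hl t ht
  by_cases hk0 : k = 0
  · -- base case k = 0
    subst hk0
    have hA0 : A l t = ∅ := by
      rw [hA, (hbase _).1]; simp
    have hS0 : S l t = Sopt := by
      rw [hS, (hbase _).2]; simp
    constructor
    · exact ⟨Sopt, by rw [hA0]; exact Finset.empty_subset _, hSopt, by rw [hS0]⟩
    · rintro x ⟨S', _, hS'sub, rfl⟩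
      rw [hS0, hchain]
      exact Topt_le T 0 l S' hS'sub
  · -- inductive case k ≥ 1
    have hk1 : 1 ≤ k := Nat.one_le_iff_ne_zero.mpr hk0
    set t' := t - Topt T k l with ht'def
    have ht' : Topt T 0 k < t' := by
      have := hsum; simp only [ht'def]; linarith
    have IHk := IH k hkl hk1 t' ht'
    have hdiff : ({k} : Finset ℕ) \ {0} = {k} := by
      rw [Finset.sdiff_eq_self_iff_disjoint, Finset.disjoint_singleton_left,
        Finset.mem_singleton]
      omega
    rw [hdiff] at hA hS
    -- key split equation for S l t
    have eqSlt : chainSum T ({0} ∪ S l t ∪ {l}) =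
        chainSum T ({0} ∪ S k t' ∪ {k}) + Topt T k l := by
      rw [hS, chainSum_split' T (S k t') Sopt 0 k l (hS_sub k t') hSopt (Nat.zero_le k)
        (le_of_lt hkl), hchain]
    have hkA : k ∈ A l t := by rw [hA]; simp
    constructor
    · -- membership
      obtain ⟨S'', hAS'', hS''sub, hx⟩ := IHk.1
      refine ⟨S'' ∪ {k} ∪ Sopt, ?_, ?_, ?_⟩
      · rw [hA]
        apply Finset.union_subset
        · exact hAS''.trans (Finset.subset_union_left.trans Finset.subset_union_left)
        · exact Finset.singleton_subset_iff.mpr (by simp)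
      · intro x hx'
        simp only [Finset.mem_union, Finset.mem_singleton] at hx'
        rw [Finset.mem_Ioo]
        rcases hx' with (hx' | hx') | hx'
        · have := Finset.mem_Ioo.mp (hS''sub hx'); omega
        · omega
        · have := Finset.mem_Ioo.mp (hSopt hx'); omega
      · rw [eqSlt, chainSum_split' T S'' Sopt 0 k l hS''sub hSopt (Nat.zero_le k)
          (le_of_lt hkl), hchain, hx]
    · -- lower bound
      rintro x ⟨S', hAS', hS'sub, rfl⟩
      have hkS' : k ∈ S' := hAS' hkA
      have hS'split : S' = (S' ∩ Finset.Ioo 0 k) ∪ {k} ∪ (S' ∩ Finset.Ioo k l) := by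
        ext x
        simp only [Finset.mem_union, Finset.mem_inter, Finset.mem_Ioo, Finset.mem_singleton]
        constructor
        · intro hx
          have := Finset.mem_Ioo.mp (hS'sub hx)
          rcases Nat.lt_trichotomy x k with h | h | h
          · exact Or.inl (Or.inl ⟨hx, this.1, h⟩)
          · exact Or.inl (Or.inr h)
          · exact Or.inr ⟨hx, h, this.2⟩
        · rintro ((⟨hx, _⟩ | hx) | ⟨hx, _⟩)
          · exact hx
          · exact hx ▸ hkS'
          · exact hx
      rw [eqSlt]
      nth_rewrite 1 [hS'split]
      rw [chainSum_split' T (S' ∩ Finset.Ioo 0 k) (S' ∩ Finset.Ioo k l) 0 k l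
        Finset.inter_subset_right Finset.inter_subset_right (Nat.zero_le k) (le_of_lt hkl)]
      have h1 : chainSum T ({0} ∪ S k t' ∪ {k}) ≤
          chainSum T ({0} ∪ (S' ∩ Finset.Ioo 0 k) ∪ {k}) := by
        apply IHk.2
        refine ⟨S' ∩ Finset.Ioo 0 k, ?_, Finset.inter_subset_right, rfl⟩
        intro x hx
        rw [Finset.mem_inter]
        refine ⟨hAS' ?_, hA_sub k t' hx⟩
        rw [hA]
        exact Finset.mem_union_left _ hx
      have h2 : Topt T k l ≤ chainSum T ({k} ∪ (S' ∩ Finset.Ioo k l) ∪ {l}) :=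
        Topt_le T k l _ Finset.inter_subset_right
      linarith
end
end

section
/- Let 0 < k < l be natural numbers, let t ∈ ℝ, and let S be a finite set with S ⊆ {1, …, l−1}, k ∈ S, and chainSum T ({0} ∪ S ∪ {l}) < t. Then chainSum T ({0} ∪ {s ∈ S : s < k} ∪ {k}) < t − T_opt(k, l). -/
noncomputable section

lemma chainSumL_split (f : ℕ → ℕ → ℝ) (x : ℕ) (B : List ℕ) : ∀ A : List ℕ,
    (List.zipWith f (A ++ x :: B) (A ++ x :: B).tail).sum
      = (List.zipWith f (A ++ [x]) (A ++ [x]).tail).sum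
        + (List.zipWith f (x :: B) B).sum := by
  intro A
  induction A with
  | nil => simp
  | cons a A ih =>
    cases A with
    | nil => simp
    | cons c A' =>
      simp only [List.cons_append, List.tail_cons, List.zipWith_cons_cons, List.sum_cons] at *
      rw [ih]; ring

lemma sort_union_append (A B : Finset ℕ) (h : ∀ a ∈ A, ∀ b ∈ B, a < b) :
    (A ∪ B).sort (· ≤ ·) = A.sort (· ≤ ·) ++ B.sort (· ≤ ·) := by
  haveI : IsAntisymm ℕ (fun x1 x2 : ℕ => x1 ≤ x2) := inferInstanceAs (IsAntisymm ℕ (· ≤ ·))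
  refine (fun hp hs1 hs2 => List.Perm.eq_of_pairwise' (r := (· ≤ ·)) hs1 hs2 hp) ?_ ?_ ?_
  · rw [← Multiset.coe_eq_coe]
    have hd : Disjoint A B := by
      rw [Finset.disjoint_left]; intro a ha hb; exact absurd (h a ha a hb) (lt_irrefl a)
    rw [← Finset.disjUnion_eq_union A B hd]
    rw [Finset.sort_eq]
    rw [show ((↑(Finset.sort A (fun x1 x2 => x1 ≤ x2) ++ Finset.sort B (fun x1 x2 => x1 ≤ x2)) : Multiset ℕ)) = (↑(A.sort (· ≤ ·)) : Multiset ℕ) + ↑(B.sort (· ≤ ·)) from rfl, Finset.sort_eq, Finset.sort_eq]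
    rfl
  · exact Finset.pairwise_sort _ _
  · rw [List.pairwise_append]
    refine ⟨Finset.pairwise_sort _ _, Finset.pairwise_sort _ _, ?_⟩
    intro a ha b hb
    have ha' : a ∈ A := (Finset.mem_sort _).mp ha
    have hb' : b ∈ B := (Finset.mem_sort _).mp hb
    exact le_of_lt (h a ha' b hb')


/-- If a feasible merge pattern `S` contains `k`, then its part below `k` is feasible
for the remaining budget `t − T_opt(k,l)`. -/
theorem prefix_feasible (T : ℕ → ℕ → ℝ) (k l : ℕ) (hk : 0 < k) (hkl : k < l) (t : ℝ)
    (S : Finset ℕ) (hS : S ⊆ Finset.Ioo 0 l) (hkS : k ∈ S)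
    (h : chainSum T ({0} ∪ S ∪ {l}) < t) :
    chainSum T ({0} ∪ S.filter (fun s => s < k) ∪ {k}) < t - Topt T k l := by
  have hmem : ∀ s ∈ S, 0 < s ∧ s < l := fun s hs => by
    have := hS hs; simp [Finset.mem_Ioo] at this; exact this
  set P : Finset ℕ := {0} ∪ S ∪ {l} with hP
  set A : Finset ℕ := {0} ∪ S.filter (fun s => s < k) with hA
  set B : Finset ℕ := S.filter (fun s => k < s) ∪ {l} with hB
  -- decomposition of P
  have hPdecomp : P = (A ∪ {k}) ∪ B := by
    ext x
    simp only [hP, hA, hB, Finset.mem_union, Finset.mem_filter, Finset.mem_singleton]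
    constructor
    · rintro ((rfl | hx) | rfl)
      · left; left; left; omega
      · rcases Nat.lt_trichotomy x k with h1 | rfl | h1
        · left; left; right; exact ⟨hx, h1⟩
        · left; right; rfl
        · right; left; exact ⟨hx, h1⟩
      · right; right; rfl
    · rintro ((( rfl | ⟨hx, _⟩) | rfl) | (⟨hx, _⟩ | rfl))
      · left; left; rfl
      · left; right; exact hx
      · left; right; exact hkS
      · left; right; exact hx
      · right; rfl
  have hAlt : ∀ a ∈ A, a < k := by
    intro a ha
    simp only [hA, Finset.mem_union, Finset.mem_filter, Finset.mem_singleton] at ha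
    rcases ha with rfl | ⟨_, h2⟩ <;> omega
  have hBgt : ∀ b ∈ B, k < b := by
    intro b hb
    simp only [hB, Finset.mem_union, Finset.mem_filter, Finset.mem_singleton] at hb
    rcases hb with ⟨_, h2⟩ | rfl <;> omega
  -- sorts
  have hsortAk : (A ∪ {k}).sort (· ≤ ·) = A.sort (· ≤ ·) ++ [k] := by
    rw [sort_union_append _ _ (by intro a ha b hb; simp at hb; subst hb; exact hAlt a ha)]
    simp
  have hsortP : P.sort (· ≤ ·) = A.sort (· ≤ ·) ++ k :: B.sort (· ≤ ·) := by
    rw [hPdecomp, sort_union_append (A ∪ {k}) B ?h1, hsortAk, List.append_assoc]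
    · rfl
    · intro a ha b hb
      simp only [Finset.mem_union, Finset.mem_singleton] at ha
      rcases ha with ha | rfl
      · exact lt_trans (hAlt a ha) (hBgt b hb)
      · exact hBgt b hb
  have hsortkB : ({k} ∪ B).sort (· ≤ ·) = k :: B.sort (· ≤ ·) := by
    rw [sort_union_append {k} B (by intro a ha b hb; simp at ha; subst ha; exact hBgt b hb)]
    simp
  -- split chainSum
  have hsplit : chainSum T P = chainSum T (A ∪ {k}) + chainSum T ({k} ∪ B) := by
    rw [chainSum, chainSum, chainSum, hsortP, hsortAk, hsortkB]
    simpa using chainSumL_split T k (B.sort (· ≤ ·)) (A.sort (· ≤ ·))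
  -- Topt bound
  have hTopt : Topt T k l ≤ chainSum T ({k} ∪ B) := by
    have hBk : {k} ∪ B = {k} ∪ S.filter (fun s => k < s) ∪ {l} := by
      rw [hB, Finset.union_assoc]
    rw [hBk]
    apply Finset.min'_le
    apply Finset.mem_image_of_mem
    rw [Finset.mem_powerset]
    intro s hs
    simp only [Finset.mem_filter] at hs
    exact Finset.mem_Ioo.mpr ⟨hs.2, (hmem s hs.1).2⟩
  have hAk : ({0} ∪ S.filter (fun s => s < k) ∪ {k} : Finset ℕ) = A ∪ {k} := by rw [hA]
  rw [hAk]
  rw [hsplit] at h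
  linarith
end
end

section
/- Let 0 < k < l be natural numbers, let A' be a finite subset of {1, …, l−1}, and let A be a nonempty finite subset of {1, …, l−1} with maximum element k. For any finite set S* with A ⊆ S* ⊆ {1, …, l−1}, one has chainSum T ({0} ∪ S* ∪ {l}) ≥ chainSum T ({0} ∪ {s ∈ S* : s < k} ∪ {k}) + T_opt(k, l). -/
noncomputable section

private lemma gsplit (f : ℕ → ℕ → ℝ) : ∀ (l1 : List ℕ) (x : ℕ) (l2 : List ℕ),
    (List.zipWith f (l1 ++ x :: l2) (l1 ++ x :: l2).tail).sum
    = (List.zipWith f (l1 ++ [x]) (l1 ++ [x]).tail).sum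
      + (List.zipWith f (x :: l2) l2).sum := by
  intro l1
  induction l1 with
  | nil => simp
  | cons a t ih =>
    intro x l2
    cases t with
    | nil => simp
    | cons b t' =>
      have h := ih x l2
      simp only [List.cons_append, List.tail_cons, List.zipWith_cons_cons,
        List.sum_cons] at h ⊢
      linarith

private lemma sort_union_lt (s t : Finset ℕ) (h : ∀ a ∈ s, ∀ b ∈ t, a < b) :
    (s ∪ t).sort (· ≤ ·) = s.sort (· ≤ ·) ++ t.sort (· ≤ ·) := by
  have hd : Disjoint s t := by
    rw [Finset.disjoint_left]
    intro a ha hat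
    exact lt_irrefl a (h a ha a hat)
  refine (fun hp hs => List.Perm.eq_of_pairwise' (Finset.pairwise_sort _ _) hs hp) ?_ ?_
  · rw [← Multiset.coe_eq_coe, ← Multiset.coe_add,
      Finset.sort_eq, Finset.sort_eq, Finset.sort_eq,
      ← Finset.disjUnion_eq_union s t hd]
    rfl
  · rw [List.pairwise_append]
    refine ⟨Finset.pairwise_sort _ _, Finset.pairwise_sort _ _, ?_⟩
    intro a ha b hb
    exact le_of_lt (h a (by simpa using (Finset.mem_sort _).1 ha) b
      (by simpa using (Finset.mem_sort _).1 hb))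

/-- Lower bound on the latency of any merge pattern containing a set `A` with maximum
element `k`. -/
theorem latency_lower_bound (T : ℕ → ℕ → ℝ) (k l : ℕ) (hk : 0 < k) (hkl : k < l)
    (A' : Finset ℕ) (hA' : A' ⊆ Finset.Ioo 0 l)
    (A : Finset ℕ) (hA : A ⊆ Finset.Ioo 0 l) (hAne : A.Nonempty)
    (hmax : A.max' hAne = k)
    (Sstar : Finset ℕ) (h1 : A ⊆ Sstar) (h2 : Sstar ⊆ Finset.Ioo 0 l) :
    chainSum T ({0} ∪ Sstar.filter (fun s => s < k) ∪ {k}) + Topt T k l ≤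
      chainSum T ({0} ∪ Sstar ∪ {l}) := by
  have hkS : k ∈ Sstar := h1 (hmax ▸ A.max'_mem hAne)
  set lo : Finset ℕ := Sstar.filter (fun s => s < k) with hlo
  set hi : Finset ℕ := Sstar.filter (fun s => k < s) with hhi
  have hSioo : ∀ a ∈ Sstar, 0 < a ∧ a < l := fun a ha => Finset.mem_Ioo.1 (h2 ha)
  -- the big set splits
  have hW : ({0} : Finset ℕ) ∪ Sstar ∪ {l}
      = (({0} ∪ lo) ∪ {k}) ∪ ((hi ∪ {l}) : Finset ℕ) := by
    ext a
    simp only [Finset.mem_union, Finset.mem_singleton, hlo, hhi, Finset.mem_filter]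
    constructor
    · rintro ((rfl | ha) | rfl)
      · exact Or.inl (Or.inl (Or.inl rfl))
      · rcases lt_trichotomy a k with h' | rfl | h'
        · exact Or.inl (Or.inl (Or.inr ⟨ha, h'⟩))
        · exact Or.inl (Or.inr rfl)
        · exact Or.inr (Or.inl ⟨ha, h'⟩)
      · exact Or.inr (Or.inr rfl)
    · rintro (((rfl | ⟨ha, _⟩) | rfl) | (⟨ha, _⟩ | rfl))
      · exact Or.inl (Or.inl rfl)
      · exact Or.inl (Or.inr ha)
      · exact Or.inl (Or.inr hkS)
      · exact Or.inl (Or.inr ha)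
      · exact Or.inr rfl
  -- sort splittings
  have hmemlo : ∀ a ∈ ({0} : Finset ℕ) ∪ lo, a < k := by
    intro a ha
    rcases Finset.mem_union.1 ha with h' | h'
    · simpa using (Finset.mem_singleton.1 h') ▸ hk
    · exact (Finset.mem_filter.1 h').2
  have hmemhi : ∀ b ∈ hi ∪ ({l} : Finset ℕ), k < b := by
    intro b hb
    rcases Finset.mem_union.1 hb with h' | h'
    · exact (Finset.mem_filter.1 h').2
    · exact (Finset.mem_singleton.1 h') ▸ hkl
  have hs1 : (({0} ∪ lo) ∪ ({k} : Finset ℕ)).sort (· ≤ ·)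
      = (({0} ∪ lo : Finset ℕ)).sort (· ≤ ·) ++ [k] := by
    rw [sort_union_lt _ _ (fun a ha b hb => (Finset.mem_singleton.1 hb) ▸ hmemlo a ha)]
    simp
  have hs2 : (({k} : Finset ℕ) ∪ (hi ∪ {l})).sort (· ≤ ·)
      = k :: ((hi ∪ {l} : Finset ℕ)).sort (· ≤ ·) := by
    rw [sort_union_lt _ _ (fun a ha b hb => (Finset.mem_singleton.1 ha) ▸ hmemhi b hb)]
    simp
  have hsW : (({0} : Finset ℕ) ∪ Sstar ∪ {l}).sort (· ≤ ·)
      = (({0} ∪ lo : Finset ℕ)).sort (· ≤ ·) ++ k :: ((hi ∪ {l} : Finset ℕ)).sort (· ≤ ·) := by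
    rw [hW, sort_union_lt _ _ ?_, hs1, List.append_assoc, List.singleton_append]
    intro a ha b hb
    rcases Finset.mem_union.1 ha with h' | h'
    · exact lt_trans (hmemlo a h') (hmemhi b hb)
    · exact (Finset.mem_singleton.1 h') ▸ hmemhi b hb
  -- split the chain sum
  have hsplit : chainSum T ({0} ∪ Sstar ∪ {l})
      = chainSum T (({0} ∪ lo) ∪ {k}) + chainSum T ({k} ∪ (hi ∪ {l})) := by
    unfold chainSum
    rw [hsW, hs1, hs2, gsplit]
    rfl
  -- the upper part is at least Topt
  have hTopt : Topt T k l ≤ chainSum T ({k} ∪ (hi ∪ {l})) := by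
    apply Finset.min'_le
    apply Finset.mem_image.2
    refine ⟨hi, Finset.mem_powerset.2 ?_, by rw [Finset.union_assoc]⟩
    intro a ha
    have := Finset.mem_filter.1 ha
    exact Finset.mem_Ioo.2 ⟨this.2, (hSioo a this.1).2⟩
  rw [hsplit, Finset.union_assoc] at *
  linarith
end
end
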